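/- For p ≥ 2, q ≥ 1 odd, and 1 ≤ i ≤ p-1, the binomial coefficient C(2^p·q + 2^p - 2^i, 2^(p+1) - 2^(i+1) - 1) is even; for i = 0 it is odd. -/

import Mathlib

lemma even_choose_of_even_odd {n k : ℕ} (hn : Even n) (hk : Odd k) :
    Even (n.choose k) := by
  obtain ⟨k, rfl⟩ : ∃ k', k = k' + 1 :=
    ⟨k - 1, by have := Nat.odd_iff.mp hk; omega⟩
  rcases Nat.eq_zero_or_pos n with rfl | hn0
  · simp [Nat.choose_eq_zero_of_lt]
  obtain ⟨n, rfl⟩ : ∃ n', n = n' + 1 := ⟨n - 1, by omega⟩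
  have h := Nat.add_one_mul_choose_eq n k
  have h2 : Even ((n+1).choose (k+1) * (k+1)) := by
    rw [← h]; exact hn.mul_right _
  rcases (Nat.even_mul.mp h2) with h1 | h2
  · exact h1
  · exact absurd h2 (Nat.not_even_iff_odd.mpr hk)

lemma odd_choose_pow_sub_one (P m k : ℕ) (hm : 1 ≤ m) (hk : k < 2 ^ P) :
    Odd ((2 ^ P * m - 1).choose k) := by
  haveI : Fact (Nat.Prime 2) := ⟨Nat.prime_two⟩
  set n := 2 ^ P * m - 1 with hn
  have key := Choose.choose_modEq_choose_mul_prod_range_choose (n := n) (k := k) (p := 2) P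
  have hdivk : k / 2 ^ P = 0 := Nat.div_eq_of_lt hk
  have hbit : ∀ i ∈ Finset.range P, (n / 2 ^ i % 2).choose (k / 2 ^ i % 2) = 1 := by
    intro i hi
    rw [Finset.mem_range] at hi
    set d := 2 ^ (P - 1 - i) with hd
    have hc : 2 ^ P = 2 ^ i * (2 * d) := by
      rw [hd, ← pow_succ']
      rw [← pow_add]
      congr 1
      omega
    have hd1 : 1 ≤ d := Nat.one_le_two_pow
    have hdm : 1 ≤ 2 * d * m := Nat.one_le_iff_ne_zero.mpr (Nat.mul_ne_zero (by omega) (by omega))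
    have hdiv : n / 2 ^ i = 2 * d * m - 1 := by
      have h2i : 0 < 2 ^ i := Nat.two_pow_pos i
      have hsplit : n = 2 ^ i * (2 * d * m - 1) + (2 ^ i - 1) := by
        have e1 : 2 ^ i * (2 * d * m - 1) = 2 ^ i * (2 * d * m) - 2 ^ i :=
          by rw [Nat.mul_sub]; omega
        have e2 : 2 ^ i * (2 * d * m) = 2 ^ P * m := by rw [hc]; ring
        rw [hn, e1, e2]
        have : 2 ^ i ≤ 2 ^ P * m := by
          calc 2 ^ i ≤ 2 ^ P := Nat.pow_le_pow_right (by norm_num) hi.le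
          _ = 2 ^ P * 1 := by ring
          _ ≤ 2 ^ P * m := Nat.mul_le_mul_left _ hm
        omega
      rw [hsplit, Nat.mul_add_div h2i, Nat.div_eq_of_lt (show 2 ^ i - 1 < 2 ^ i by omega)]
      omega
    have hmod : n / 2 ^ i % 2 = 1 := by
      rw [hdiv]
      have e : 2 * d * m = 2 * (d * m) := by ring
      omega
    rw [hmod]
    rcases Nat.mod_two_eq_zero_or_one (k / 2 ^ i) with h | h <;> rw [h] <;> simp
  rw [hdivk] at key
  have h1 : (n.choose k : ℤ) ≡ 1 [ZMOD 2] := by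
    calc (n.choose k : ℤ) ≡ _ [ZMOD 2] := key
    _ = 1 := by
        rw [Finset.prod_congr rfl hbit]
        simp
  have h2 : (n.choose k : ℤ) % 2 = 1 % 2 := h1
  rw [Nat.odd_iff]
  omega

theorem stmt8 (p q : ℕ) (hp : 2 ≤ p) (hq : Odd q) (hq1 : 1 ≤ q) :
    (∀ i, 1 ≤ i → i ≤ p - 1 →
        Even (Nat.choose (2 ^ p * q + 2 ^ p - 2 ^ i) (2 ^ (p + 1) - 2 ^ (i + 1) - 1))) ∧
      Odd (Nat.choose (2 ^ p * q + 2 ^ p - 2 ^ 0) (2 ^ (p + 1) - 2 ^ (0 + 1) - 1)) := by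
  constructor
  · intro i hi1 hip
    apply even_choose_of_even_odd
    · obtain ⟨a, ha⟩ : (2:ℕ) ∣ 2 ^ p := dvd_pow_self 2 (by omega)
      obtain ⟨d, hd⟩ : (2:ℕ) ∣ 2 ^ i := dvd_pow_self 2 (by omega)
      have h3 : 2 ^ i ≤ 2 ^ p := Nat.pow_le_pow_right (by norm_num) (by omega)
      rw [Nat.even_iff, ha, hd]
      have e : 2 * a * q = 2 * (a * q) := by ring
      rw [e]
      omega
    · have h1 : 2 ^ (i+1) ≤ 2 ^ p := Nat.pow_le_pow_right (by norm_num) (by omega)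
      have h2 : 2 ^ p < 2 ^ (p+1) := Nat.pow_lt_pow_right (by norm_num) (by omega)
      obtain ⟨d, hd⟩ : (2:ℕ) ∣ 2 ^ (i+1) := dvd_pow_self 2 (by omega)
      obtain ⟨e, he⟩ : (2:ℕ) ∣ 2 ^ (p+1) := dvd_pow_self 2 (by omega)
      rw [Nat.odd_iff]; omega
  · obtain ⟨r, hr⟩ := hq
    have hn : 2 ^ p * q + 2 ^ p - 2 ^ 0 = 2 ^ (p+1) * (r + 1) - 1 := by
      have e : 2 ^ p * (2 * r + 1) + 2 ^ p = 2 ^ (p+1) * (r + 1) := by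
        rw [pow_succ]; ring
      rw [hr]
      omega
    have hk : 2 ^ (p+1) - 2 ^ (0+1) - 1 < 2 ^ (p+1) := by
      have : 0 < 2 ^ (p+1) := Nat.two_pow_pos _
      omega
    rw [hn]
    exact odd_choose_pow_sub_one (p+1) (r+1) _ (by omega) hk
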